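/- arXiv:2404.03457 — 4 statements merged into one kernel-verified Lean document; each statement's English description precedes it below -/
import Mathlib

section
/- Let r and x be integers and d ≥ 1 an integer, and set ℓ₃ = gcd(3, d(d+1)). Then 3/ℓ₃, 10d(d+1)/ℓ₃, d(d+1)(3d²+3d-1)/ℓ₃ and ℓ₃(2d+1)/3 are all integers, and ∑_{i=-d}^{d} (x+ir)^5 = (ℓ₃(2d+1)/3) · x · ((3/ℓ₃)x⁴ + (10d(d+1)/ℓ₃)x²r² + (d(d+1)(3d²+3d-1)/ℓ₃)r⁴). -/
lemma sum5_aux (r x : ℤ) : ∀ d : ℤ, 1 ≤ d →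
    15 * ∑ i ∈ Finset.Icc (-d) d, (x + i*r)^5 =
      15*(2*d+1)*x^5 + 50*d*(d+1)*(2*d+1)*x^3*r^2
        + 5*d*(d+1)*(2*d+1)*(3*d^2+3*d-1)*x*r^4 := by
  have hins : ∀ d : ℤ, 0 ≤ d → Finset.Icc (-(d+1)) (d+1)
      = insert (-(d+1)) (insert (d+1) (Finset.Icc (-d) d)) := by
    intro d hd; ext i
    simp only [Finset.mem_Icc, Finset.mem_insert]
    omega
  refine Int.le_induction ?_ ?_
  · have h1 : Finset.Icc (-1:ℤ) 1 = {-1, 0, 1} := by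
      ext i
      simp only [Finset.mem_Icc, Finset.mem_insert, Finset.mem_singleton]
      omega
    rw [h1]
    norm_num [Finset.sum_insert, Finset.mem_insert]
    ring
  · intro d hd IH
    rw [hins d (by omega),
      Finset.sum_insert (by simp only [Finset.mem_Icc, Finset.mem_insert]; omega),
      Finset.sum_insert (by simp only [Finset.mem_Icc]; omega)]
    linear_combination IH

theorem sum_fifth_powers_factorization (d : ℤ) (hd : 1 ≤ d) (r x : ℤ)
    (l3 : ℤ) (hl3 : l3 = Int.gcd 3 (d*(d+1))) :
    (l3 ∣ 3 ∧ l3 ∣ 10*d*(d+1) ∧ l3 ∣ d*(d+1)*(3*d^2+3*d-1) ∧ (3 : ℤ) ∣ l3*(2*d+1)) ∧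
    ∑ i ∈ Finset.Icc (-d) d, (x + i*r)^5 =
      (l3*(2*d+1)/3) * x *
        ((3/l3)*x^4 + (10*d*(d+1)/l3)*x^2*r^2 + (d*(d+1)*(3*d^2+3*d-1)/l3)*r^4) := by
  have L := sum5_aux r x d hd
  have hdvd3 : l3 ∣ 3 := by rw [hl3]; exact Int.gcd_dvd_left _ _
  have hdvdt : l3 ∣ d*(d+1) := by rw [hl3]; exact Int.gcd_dvd_right _ _
  have h0 : 0 ≤ l3 := by rw [hl3]; exact Int.natCast_nonneg _
  have hle : l3 ≤ 3 := Int.le_of_dvd (by norm_num) hdvd3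
  have h13 : l3 = 1 ∨ l3 = 3 := by
    interval_cases l3 <;> omega
  rcases h13 with hB | hA
  · -- l3 = 1 : then 3 ∤ d(d+1), so 3 ∣ 2d+1
    have hnd : ¬ (3 : ℤ) ∣ d*(d+1) := by
      intro h
      have : (3:ℤ) ∣ l3 := by
        rw [hl3]
        exact_mod_cast Int.dvd_gcd dvd_rfl h
      rw [hB] at this
      norm_num at this
    have hu : (3:ℤ) ∣ 2*d+1 := by
      have h3 : d % 3 = 0 ∨ d % 3 = 1 ∨ d % 3 = 2 := by omega
      rcases h3 with h | h | h
      · exfalso; apply hnd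
        obtain ⟨k, hk⟩ : ∃ k, d = 3*k := ⟨d/3, by omega⟩
        exact ⟨k*(d+1), by rw [hk]; ring⟩
      · obtain ⟨k, hk⟩ : ∃ k, d = 3*k+1 := ⟨d/3, by omega⟩
        exact ⟨2*k+1, by omega⟩
      · exfalso; apply hnd
        obtain ⟨k, hk⟩ : ∃ k, d = 3*k+2 := ⟨d/3, by omega⟩
        exact ⟨d*(k+1), by rw [hk]; ring⟩
    obtain ⟨u, hu⟩ := hu
    refine ⟨⟨hdvd3, by rw [hB]; exact one_dvd _, by rw [hB]; exact one_dvd _,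
      ⟨u, by rw [hB]; linarith⟩⟩, ?_⟩
    have e1 : l3*(2*d+1)/3 = u := by
      rw [hB, one_mul, hu, Int.mul_ediv_cancel_left _ (by norm_num : (3:ℤ) ≠ 0)]
    have e2 : (3:ℤ)/l3 = 3 := by rw [hB]; norm_num
    have e3 : 10*d*(d+1)/l3 = 10*d*(d+1) := by rw [hB, Int.ediv_one]
    have e4 : d*(d+1)*(3*d^2+3*d-1)/l3 = d*(d+1)*(3*d^2+3*d-1) := by
      rw [hB, Int.ediv_one]
    rw [e1, e2, e3, e4]
    apply mul_left_cancel₀ (show (15:ℤ) ≠ 0 by norm_num)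
    rw [L]
    linear_combination (5*x*(3*x^4 + 10*d*(d+1)*x^2*r^2 + d*(d+1)*(3*d^2+3*d-1)*r^4)) * hu
  · -- l3 = 3 : then 3 ∣ d(d+1)
    have hs : (3:ℤ) ∣ d*(d+1) := hA ▸ hdvdt
    obtain ⟨s, hs⟩ := hs
    refine ⟨⟨hdvd3, ⟨10*s, by rw [hA, mul_assoc, hs]; ring⟩,
      ⟨s*(3*d^2+3*d-1), by rw [hA, hs]; ring⟩, ⟨2*d+1, by rw [hA]⟩⟩, ?_⟩
    have e1 : l3*(2*d+1)/3 = 2*d+1 := by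
      rw [hA, Int.mul_ediv_cancel_left _ (by norm_num : (3:ℤ) ≠ 0)]
    have e2 : (3:ℤ)/l3 = 1 := by rw [hA]; norm_num
    have e3 : 10*d*(d+1)/l3 = 10*s := by
      rw [hA, show (10*d*(d+1) : ℤ) = 3*(10*s) by rw [mul_assoc, hs]; ring,
        Int.mul_ediv_cancel_left _ (by norm_num : (3:ℤ) ≠ 0)]
    have e4 : d*(d+1)*(3*d^2+3*d-1)/l3 = s*(3*d^2+3*d-1) := by
      rw [hA, show (d*(d+1)*(3*d^2+3*d-1) : ℤ) = 3*(s*(3*d^2+3*d-1)) by rw [hs]; ring,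
        Int.mul_ediv_cancel_left _ (by norm_num : (3:ℤ) ≠ 0)]
    rw [e1, e2, e3, e4]
    apply mul_left_cancel₀ (show (15:ℤ) ≠ 0 by norm_num)
    rw [L]
    linear_combination (50*(2*d+1)*x^3*r^2 + 5*(2*d+1)*(3*d^2+3*d-1)*x*r^4) * hs
end

section
/- Let d ≥ 1, let r be a nonzero integer, let p be a prime with p ≥ 2·M_d, and let q be a prime with q ∣ 3d²+3d-1. Suppose integers x, y with gcd(x,r) = 1 and x ≠ 0 satisfy ∑_{i=-d}^{d} (x+ir)^5 = y^p, and suppose q ∣ x. Then 2·v_q(x) ≥ v_q(3d²+3d-1) - v_q(5), and exactly one of the following holds: (a) v_q(x) = (v_q(3d²+3d-1) - v_q(5))/2 and v_q(P_d(x,r)) = p·v_q(y) - v_q(2d+1) - (v_q(3d²+3d-1) - v_q(5))/2; or (b) v_q(x) = p·v_q(y) - v_q(3d²+3d-1) - v_q(2d+1) and v_q(P_d(x,r)) = v_q(3d²+3d-1). -/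
/-- `M_d`: the maximum over primes `q` of `v_q(d(d+1)(2d+1)(3d²+3d-1))`. -/
def Md (d : ℤ) : ℕ :=
  Finset.sup (d*(d+1)*(2*d+1)*(3*d^2+3*d-1)).natAbs.factorization.support
    (fun q => (d*(d+1)*(2*d+1)*(3*d^2+3*d-1)).natAbs.factorization q)

/-- `P_d(x,r) = (3/ℓ₃)x⁴ + (10d(d+1)/ℓ₃)x²r² + (d(d+1)(3d²+3d-1)/ℓ₃)r⁴`
where `ℓ₃ = gcd(3, d(d+1))`. -/
def Pd (d x r : ℤ) : ℤ :=
  (3 / (Int.gcd 3 (d*(d+1)) : ℤ)) * x^4 +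
  (10*d*(d+1) / (Int.gcd 3 (d*(d+1)) : ℤ)) * x^2 * r^2 +
  (d*(d+1)*(3*d^2+3*d-1) / (Int.gcd 3 (d*(d+1)) : ℤ)) * r^4

lemma sum_pow5 (x r : ℤ) (d : ℤ) (hd : 0 ≤ d) :
    3 * ∑ i ∈ Finset.Icc (-d) d, (x + i*r)^5
      = (2*d+1) * x *
        (3*x^4 + 5*(x^2*(2*(d*(d+1))*r^2)) + (3*d^2+3*d-1)*((d*(d+1))*r^4)) := by
  refine Int.le_induction (motive := fun d _ => 3 * ∑ i ∈ Finset.Icc (-d) d, (x + i*r)^5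
      = (2*d+1) * x *
        (3*x^4 + 5*(x^2*(2*(d*(d+1))*r^2)) + (3*d^2+3*d-1)*((d*(d+1))*r^4)))
    ?_ ?_ d hd
  · norm_num; ring
  · intro n hn ih
    have h1 : Finset.Icc (-(n+1)) (n+1)
        = insert (-(n+1)) (insert (n+1) (Finset.Icc (-n) n)) := by
      ext i
      simp only [Finset.mem_Icc, Finset.mem_insert]
      omega
    rw [h1, Finset.sum_insert (by simp only [Finset.mem_Icc, Finset.mem_insert]; omega),
      Finset.sum_insert (by simp only [Finset.mem_Icc]; omega)]
    linear_combination ih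

lemma gcd_mul_Pd (d x r : ℤ) :
    (Int.gcd 3 (d*(d+1)) : ℤ) * Pd d x r
      = 3*x^4 + 5*(x^2*(2*(d*(d+1))*r^2)) + (3*d^2+3*d-1)*((d*(d+1))*r^4) := by
  by_cases h3 : (3:ℤ) ∣ d*(d+1)
  · have hg : Int.gcd 3 (d*(d+1)) = 3 := by
      exact_mod_cast Int.gcd_eq_left (by norm_num) h3
    obtain ⟨c, hc⟩ := h3
    have e2 : ((10*d*(d+1):ℤ) / 3) = 10*c := by
      rw [show (10*d*(d+1):ℤ) = 3*(10*c) by linear_combination 10*hc]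
      exact Int.mul_ediv_cancel_left _ (by norm_num)
    have e3 : ((d*(d+1)*(3*d^2+3*d-1):ℤ) / 3) = c*(3*d^2+3*d-1) := by
      rw [show (d*(d+1)*(3*d^2+3*d-1):ℤ) = 3*(c*(3*d^2+3*d-1)) by
        linear_combination (3*d^2+3*d-1)*hc]
      exact Int.mul_ediv_cancel_left _ (by norm_num)
    rw [Pd, hg]
    push_cast
    rw [e2, e3]
    linear_combination (-(10*x^2*r^2) - (3*d^2+3*d-1)*r^4) * hc
  · have hg : Int.gcd 3 (d*(d+1)) = 1 := by
      have hd3 : (Int.gcd 3 (d*(d+1))) ∣ 3 := by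
        have := Int.gcd_dvd_left (a := (3:ℤ)) (b := d*(d+1))
        exact_mod_cast Int.natCast_dvd.mp this
      rcases (Nat.prime_three).eq_one_or_self_of_dvd _ hd3 with h | h
      · exact h
      · exfalso; apply h3
        have := Int.gcd_dvd_right (a := (3:ℤ)) (b := d*(d+1))
        rwa [h] at this
    rw [Pd, hg]
    push_cast
    norm_num
    ring

section aux
variable {q : ℕ} [hq : Fact q.Prime]

lemma padicValInt_pow' {z : ℤ} (hz : z ≠ 0) (n : ℕ) :
    padicValInt q (z^n) = n * padicValInt q z := by
  induction n with
  | zero => simp [padicValInt.one]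
  | succ n ih =>
    rw [pow_succ, padicValInt.mul (pow_ne_zero _ hz) hz, ih]; ring

lemma pow_dvd_of_le_padicValInt {z : ℤ} {m : ℕ} (h : m ≤ padicValInt q z) :
    (q:ℤ)^m ∣ z := (padicValInt_dvd_iff m z).mpr (Or.inr h)

lemma not_pow_dvd_of_lt {z : ℤ} (hz : z ≠ 0) {m : ℕ} (h : padicValInt q z < m) :
    ¬(q:ℤ)^m ∣ z := by
  intro hdvd
  rcases (padicValInt_dvd_iff m z).mp hdvd with h' | h'
  · exact hz h'
  · omega

lemma padicValInt_add3_min {A B C : ℤ} (hS : A+B+C ≠ 0) {m : ℕ}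
    (hA : (q:ℤ)^m ∣ A) (hB : (q:ℤ)^m ∣ B) (hC : (q:ℤ)^m ∣ C) :
    m ≤ padicValInt q (A+B+C) := by
  have hd : (q:ℤ)^m ∣ A+B+C := dvd_add (dvd_add hA hB) hC
  rcases (padicValInt_dvd_iff m _).mp hd with h | h
  · exact absurd h hS
  · exact h

lemma padicValInt_add3_eq {A B C : ℤ} (hC : C ≠ 0) (hS : A+B+C ≠ 0) {k : ℕ}
    (hvC : padicValInt q C = k)
    (hA : (q:ℤ)^(k+1) ∣ A) (hB : (q:ℤ)^(k+1) ∣ B) :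
    padicValInt q (A+B+C) = k := by
  have hCk : (q:ℤ)^k ∣ C := hvC ▸ padicValInt_dvd C
  have hd : (q:ℤ)^k ∣ A+B+C :=
    dvd_add (dvd_add ((pow_dvd_pow _ k.le_succ).trans hA)
      ((pow_dvd_pow _ k.le_succ).trans hB)) hCk
  have hnd : ¬ (q:ℤ)^(k+1) ∣ A+B+C := by
    intro h
    have hC' : (q:ℤ)^(k+1) ∣ C := by
      have hCe : C = (A+B+C) - A - B := by ring
      rw [hCe]
      exact dvd_sub (dvd_sub h hA) hB
    exact not_pow_dvd_of_lt hC (by omega) hC'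
  have h1 : k ≤ padicValInt q (A+B+C) := by
    rcases (padicValInt_dvd_iff k _).mp hd with h | h
    · exact absurd h hS
    · exact h
  have h2 : ¬ (k+1 ≤ padicValInt q (A+B+C)) :=
    fun hh => hnd (pow_dvd_of_le_padicValInt hh)
  omega

end aux

theorem valuation_q_dvd_three_d_sq (d : ℤ) (hd : 1 ≤ d) (r : ℤ) (hr : r ≠ 0)
    (p q : ℕ) (hp : p.Prime) (hq : q.Prime) (hpM : 2 * Md d ≤ p)
    (hqd : (q : ℤ) ∣ 3*d^2+3*d-1) (x y : ℤ) (hxr : Int.gcd x r = 1) (hx : x ≠ 0)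
    (heq : ∑ i ∈ Finset.Icc (-d) d, (x + i*r)^5 = y^p) (hqx : (q : ℤ) ∣ x) :
    ((padicValInt q (3*d^2+3*d-1) : ℤ) - padicValInt q 5 ≤ 2 * padicValInt q x) ∧
    Xor'
      ((padicValInt q x : ℚ) =
         ((padicValInt q (3*d^2+3*d-1) : ℚ) - padicValInt q 5) / 2 ∧
       (padicValInt q (Pd d x r) : ℚ) =
         p * padicValInt q y - padicValInt q (2*d+1) -
           ((padicValInt q (3*d^2+3*d-1) : ℚ) - padicValInt q 5) / 2)
      ((padicValInt q x : ℚ) =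
         p * padicValInt q y - padicValInt q (3*d^2+3*d-1) - padicValInt q (2*d+1) ∧
       (padicValInt q (Pd d x r) : ℚ) = (padicValInt q (3*d^2+3*d-1) : ℚ)) := by
  haveI : Fact q.Prime := ⟨hq⟩
  have hqI : Prime (q:ℤ) := Nat.prime_iff_prime_int.mp hq
  -- basic nonvanishing / positivity
  have hD5 : (5:ℤ) ≤ 3*d^2+3*d-1 := by nlinarith
  have hD0 : (3*d^2+3*d-1 : ℤ) ≠ 0 := by omega
  have h2d0 : (2*d+1 : ℤ) ≠ 0 := by omega
  have hddpos : (0:ℤ) < d*(d+1) := mul_pos (by omega) (by omega)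
  have hdd0 : (d*(d+1) : ℤ) ≠ 0 := ne_of_gt hddpos
  obtain ⟨c, hc⟩ : Even (d*(d+1)) := Int.even_mul_succ_self d
  have hddsq : d^2 + d = c + c := by linear_combination hc
  -- q is not 2, 3
  have hq2 : q ≠ 2 := by
    rintro rfl
    obtain ⟨t, ht⟩ := hqd
    push_cast at ht
    omega
  have hq3 : q ≠ 3 := by
    rintro rfl
    obtain ⟨t, ht⟩ := hqd
    push_cast at ht
    omega
  -- q does not divide r
  have hqr : ¬ (q:ℤ) ∣ r := by
    intro h
    have h1 : (q:ℤ) ∣ (Int.gcd x r : ℤ) := Int.dvd_coe_gcd hqx h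
    rw [hxr] at h1
    have h2 : q ∣ 1 := by exact_mod_cast h1
    have h3 := Nat.le_of_dvd one_pos h2
    have := hq.two_le
    omega
  -- q does not divide d(d+1)
  have hqdd : ¬ (q:ℤ) ∣ d*(d+1) := by
    intro h
    have h2 : (q:ℤ) ∣ 3*(d*(d+1)) - (3*d^2+3*d-1) := dvd_sub (h.mul_left 3) hqd
    rw [show (3*(d*(d+1)) - (3*d^2+3*d-1) : ℤ) = 1 by ring] at h2
    have h3 := Int.le_of_dvd one_pos h2
    have := hq.two_le
    omega
  have hnq3 : ¬ (q:ℤ) ∣ 3 := by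
    intro h
    have h' : q ∣ 3 := by
      have := Int.natCast_dvd.mp h
      simpa using this
    exact hq3 ((Nat.prime_dvd_prime_iff_eq hq Nat.prime_three).mp h')
  have hv3 : padicValInt q 3 = 0 := padicValInt.eq_zero_of_not_dvd hnq3
  have hnq2 : ¬ (q:ℤ) ∣ 2 := by
    intro h
    have h' : q ∣ 2 := by
      have := Int.natCast_dvd.mp h
      simpa using this
    exact hq2 ((Nat.prime_dvd_prime_iff_eq hq Nat.prime_two).mp h')
  -- abbreviations
  set a := padicValInt q x with ha_def
  set k := padicValInt q (3*d^2+3*d-1) with hk_def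
  set e := padicValInt q (2*d+1) with he_def
  set v5 := padicValInt q 5 with hv5_def
  set vy := padicValInt q y with hvy_def
  set vP := padicValInt q (Pd d x r) with hvP_def
  have hv5le : v5 ≤ 1 := by
    rcases eq_or_ne q 5 with rfl | hq5
    · have h1 : padicValInt 5 (5:ℤ) = 1 := by
        have := padicValInt.self (p := 5) (by norm_num)
        simpa using this
      rw [hv5_def, h1]
    · have h1 : padicValInt q (5:ℤ) = 0 := padicValInt.eq_zero_of_not_dvd (by
        intro h
        have h' : q ∣ 5 := by
          have := Int.natCast_dvd.mp h
          simpa using this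
        exact hq5 ((Nat.prime_dvd_prime_iff_eq hq (by norm_num)).mp h'))
      rw [hv5_def, h1]
      norm_num
  -- positivity of E and pieces
  have hx2 : (0:ℤ) < x^2 := by positivity
  have hr2 : (0:ℤ) < r^2 := by positivity
  have hT1pos : (0:ℤ) < 3*x^4 := by positivity
  have hT2pos : (0:ℤ) < 5*(x^2*(2*(d*(d+1))*r^2)) :=
    mul_pos (by norm_num) (mul_pos hx2 (mul_pos (mul_pos (by norm_num) hddpos) (by positivity)))
  have hT3pos : (0:ℤ) < (3*d^2+3*d-1)*((d*(d+1))*r^4) :=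
    mul_pos (by omega) (mul_pos hddpos (by positivity))
  have hEpos : (0:ℤ) < 3*x^4 + 5*(x^2*(2*(d*(d+1))*r^2)) + (3*d^2+3*d-1)*((d*(d+1))*r^4) := by
    have := add_pos (add_pos hT1pos hT2pos) hT3pos
    linarith
  have hE0 : (3*x^4 + 5*(x^2*(2*(d*(d+1))*r^2)) + (3*d^2+3*d-1)*((d*(d+1))*r^4) : ℤ) ≠ 0 :=
    ne_of_gt hEpos
  -- gcd facts
  have hgPd : (Int.gcd 3 (d*(d+1)) : ℤ) * Pd d x r
      = 3*x^4 + 5*(x^2*(2*(d*(d+1))*r^2)) + (3*d^2+3*d-1)*((d*(d+1))*r^4) := gcd_mul_Pd d x r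
  have hg13 : Int.gcd 3 (d*(d+1)) = 1 ∨ Int.gcd 3 (d*(d+1)) = 3 := by
    have hd3 : (Int.gcd 3 (d*(d+1))) ∣ 3 := by
      have := Int.gcd_dvd_left (a := (3:ℤ)) (b := d*(d+1))
      exact_mod_cast Int.natCast_dvd.mp this
    exact (Nat.prime_three).eq_one_or_self_of_dvd _ hd3
  have hg0 : (Int.gcd 3 (d*(d+1)) : ℤ) ≠ 0 := by
    rcases hg13 with h | h <;> rw [h] <;> norm_num
  have hvg : padicValInt q (Int.gcd 3 (d*(d+1)) : ℤ) = 0 := by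
    rcases hg13 with h | h <;> rw [h]
    · simpa using padicValInt.one (p := q)
    · simpa using hv3
  have hgPd0 : (Int.gcd 3 (d*(d+1)) : ℤ) * Pd d x r ≠ 0 := by rw [hgPd]; exact hE0
  have hPd0 : Pd d x r ≠ 0 := by
    intro h
    rw [h, mul_zero] at hgPd0
    exact hgPd0 rfl
  -- the key equation
  have h3y : (3:ℤ) * y^p
      = (2*d+1) * (x * ((Int.gcd 3 (d*(d+1)) : ℤ) * Pd d x r)) := by
    rw [← heq, hgPd]
    rw [sum_pow5 x r d (by omega)]
    ring
  have hy0 : y ≠ 0 := by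
    intro h
    rw [h, zero_pow hp.ne_zero, mul_zero] at h3y
    exact (mul_ne_zero h2d0 (mul_ne_zero hx hgPd0)) h3y.symm
  -- valuation of the key equation
  have hvE : padicValInt q (3*x^4 + 5*(x^2*(2*(d*(d+1))*r^2)) + (3*d^2+3*d-1)*((d*(d+1))*r^4))
      = vP := by
    rw [← hgPd, padicValInt.mul hg0 hPd0, hvg, zero_add]
  have hval : p * vy = e + (a + vP) := by
    have hL : padicValInt q ((3:ℤ) * y^p) = p * vy := by
      rw [padicValInt.mul (by norm_num) (pow_ne_zero _ hy0), hv3, padicValInt_pow' hy0, zero_add]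
    have hR : padicValInt q ((2*d+1) * (x * ((Int.gcd 3 (d*(d+1)) : ℤ) * Pd d x r)))
        = e + (a + vP) := by
      rw [padicValInt.mul h2d0 (mul_ne_zero hx hgPd0), padicValInt.mul hx hgPd0,
        padicValInt.mul hg0 hPd0, hvg, zero_add]
    rw [← hL, h3y, hR]
  -- valuations of the three terms
  have hT1v : padicValInt q (3*x^4) = 4*a := by
    rw [padicValInt.mul (by norm_num) (pow_ne_zero _ hx), hv3, padicValInt_pow' hx, zero_add]
  have hinner2 : padicValInt q (2*(d*(d+1))*r^2) = 0 := by
    apply padicValInt.eq_zero_of_not_dvd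
    intro h
    rcases hqI.dvd_mul.mp h with h1 | h1
    · rcases hqI.dvd_mul.mp h1 with h2 | h2
      · exact hnq2 h2
      · exact hqdd h2
    · exact hqr (hqI.dvd_of_dvd_pow h1)
  have hT2v : padicValInt q (5*(x^2*(2*(d*(d+1))*r^2))) = v5 + 2*a := by
    have hi0 : (2*(d*(d+1))*r^2 : ℤ) ≠ 0 := mul_ne_zero (by positivity) (by positivity)
    rw [padicValInt.mul (by norm_num) (mul_ne_zero (by positivity) hi0),
      padicValInt.mul (by positivity) hi0, padicValInt_pow' hx, hinner2, add_zero]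
  have hinner3 : padicValInt q ((d*(d+1))*r^4) = 0 := by
    apply padicValInt.eq_zero_of_not_dvd
    intro h
    rcases hqI.dvd_mul.mp h with h1 | h1
    · exact hqdd h1
    · exact hqr (hqI.dvd_of_dvd_pow h1)
  have hT3v : padicValInt q ((3*d^2+3*d-1)*((d*(d+1))*r^4)) = k := by
    rw [padicValInt.mul hD0 (mul_ne_zero hdd0 (by positivity)), hinner3, add_zero]
  -- basic lower bounds
  have ha1 : 1 ≤ a := by
    rcases (padicValInt_dvd_iff 1 x).mp (by simpa using hqx) with h | h
    · exact absurd h hx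
    · exact h
  have hk1 : 1 ≤ k := by
    rcases (padicValInt_dvd_iff 1 (3*d^2+3*d-1)).mp (by simpa using hqd) with h | h
    · exact absurd h hD0
    · exact h
  -- Md bound
  have hMd : e + k ≤ Md d := by
    have hN0 : (d*(d+1)*(2*d+1)*(3*d^2+3*d-1) : ℤ) ≠ 0 :=
      mul_ne_zero (mul_ne_zero hdd0 h2d0) hD0
    have hvdd : padicValInt q (d*(d+1)) = 0 := padicValInt.eq_zero_of_not_dvd hqdd
    have hvN : padicValInt q (d*(d+1)*(2*d+1)*(3*d^2+3*d-1)) = e + k := by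
      rw [padicValInt.mul (mul_ne_zero hdd0 h2d0) hD0,
        padicValInt.mul hdd0 h2d0, hvdd, zero_add]
    have hmem : q ∈ (d*(d+1)*(2*d+1)*(3*d^2+3*d-1)).natAbs.factorization.support := by
      rw [Nat.support_factorization]
      refine Nat.mem_primeFactors.mpr ⟨hq, ?_, ?_⟩
      · exact Int.natCast_dvd.mp (hqd.mul_left _)
      · simp only [ne_eq, Int.natAbs_eq_zero]; exact hN0
    have hle : (d*(d+1)*(2*d+1)*(3*d^2+3*d-1)).natAbs.factorization q ≤ Md d := by
      simpa [Md] using Finset.le_sup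
        (f := fun q => (d*(d+1)*(2*d+1)*(3*d^2+3*d-1)).natAbs.factorization q) hmem
    have hPV : padicValInt q (d*(d+1)*(2*d+1)*(3*d^2+3*d-1))
        = (d*(d+1)*(2*d+1)*(3*d^2+3*d-1)).natAbs.factorization q := by
      rw [Nat.factorization_def _ hq]; rfl
    rw [← hvN, hPV]
    exact hle
  -- valuation of E: lower bound
  have hvE_ge : min k (2*a+v5) ≤ vP := by
    rw [← hvE]
    refine padicValInt_add3_min hE0 ?_ ?_ ?_
    · exact pow_dvd_of_le_padicValInt (by rw [hT1v]; omega)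
    · exact pow_dvd_of_le_padicValInt (by rw [hT2v]; omega)
    · exact pow_dvd_of_le_padicValInt (by rw [hT3v]; omega)
  rcases lt_trichotomy k (2*a+v5) with hcase | hcase | hcase
  · -- k < 2a+v5 : vP = k, alternative (b)
    have hvPk : vP = k := by
      rw [← hvE]
      refine padicValInt_add3_eq (ne_of_gt hT3pos) hE0 hT3v ?_ ?_
      · exact pow_dvd_of_le_padicValInt (by rw [hT1v]; omega)
      · exact pow_dvd_of_le_padicValInt (by rw [hT2v]; omega)
    constructor
    · omega
    · refine Or.inr ⟨⟨?_, ?_⟩, ?_⟩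
      · have : p * vy = e + (a + k) := by rw [hval, hvPk]
        have hcast : (p:ℚ) * vy = e + (a + k) := by exact_mod_cast this
        push_cast
        linarith
      · rw [hvPk]
      · rintro ⟨hA1, -⟩
        have : ((2*a + v5 : ℕ) : ℚ) = k := by push_cast; linarith [hA1]
        have h2 : (2*a+v5 : ℕ) = k := by exact_mod_cast this
        omega
  · -- k = 2a+v5 : alternative (a)
    have hvPge : k ≤ vP := by omega
    have hvPne : vP ≠ k := by
      intro hvPk
      have h1 : p * vy = e + (a + k) := by rw [hval, hvPk]
      have hvy1 : 1 ≤ vy := by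
        rcases Nat.eq_zero_or_pos vy with h | h
        · rw [h, mul_zero] at h1; omega
        · exact h
      have hple : p ≤ e + (a + k) := by
        calc p = p * 1 := (mul_one p).symm
        _ ≤ p * vy := Nat.mul_le_mul_left p hvy1
        _ = e + (a + k) := h1
      omega
    constructor
    · omega
    · refine Or.inl ⟨⟨?_, ?_⟩, ?_⟩
      · have : ((k:ℚ)) = 2*a + v5 := by exact_mod_cast congrArg (Nat.cast : ℕ → ℚ) hcase
        linarith
      · have hcast : (p:ℚ) * vy = e + (a + vP) := by exact_mod_cast hval
        have : ((k:ℚ)) = 2*a + v5 := by exact_mod_cast congrArg (Nat.cast : ℕ → ℚ) hcase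
        push_cast
        linarith
      · rintro ⟨hB1, -⟩
        -- hB1 forces vP = k
        have hcast : (p:ℚ) * vy = e + (a + vP) := by exact_mod_cast hval
        have hvPk : (vP:ℚ) = k := by linarith [hB1]
        exact hvPne (by exact_mod_cast hvPk)
  · -- k > 2a+v5 : impossible
    exfalso
    have hvP2 : vP = 2*a+v5 := by
      rw [← hvE]
      have hre : (3*x^4 + 5*(x^2*(2*(d*(d+1))*r^2)) + (3*d^2+3*d-1)*((d*(d+1))*r^4) : ℤ)
          = 3*x^4 + (3*d^2+3*d-1)*((d*(d+1))*r^4) + 5*(x^2*(2*(d*(d+1))*r^2)) := by ring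
      rw [hre]
      have hT2v' : padicValInt q (5*(x^2*(2*(d*(d+1))*r^2))) = 2*a+v5 := by omega
      refine padicValInt_add3_eq (ne_of_gt hT2pos) (by rw [← hre]; exact hE0) hT2v' ?_ ?_
      · exact pow_dvd_of_le_padicValInt (by rw [hT1v]; omega)
      · exact pow_dvd_of_le_padicValInt (by rw [hT3v]; omega)
    have h1 : p * vy = e + (a + (2*a+v5)) := by rw [hval, hvP2]
    have hvy1 : 1 ≤ vy := by
      rcases Nat.eq_zero_or_pos vy with h | h
      · rw [h, mul_zero] at h1; omega
      · exact h
    have hple : p ≤ e + (a + (2*a+v5)) := by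
      calc p = p * 1 := (mul_one p).symm
      _ ≤ p * vy := Nat.mul_le_mul_left p hvy1
      _ = _ := h1
    omega
end

section
/- Let r be a nonzero integer, p > 7 a prime, and suppose integers x, y with gcd(x,r) = 1 and (x,y) ≠ (0,0) satisfy (x-2r)^5 + (x-r)^5 + x^5 + (x+r)^5 + (x+2r)^5 = y^p. Set κ₂ = gcd(x,2), κ₅ = gcd(x,5), κ₁₇ = gcd(x,17). Then there exist nonzero coprime integers a, b such that 33·κ₂^{4p-5}·κ₅^{4p-4}·κ₁₇^{4p-6}·a^{4p} + (17/κ₁₇)·(5/κ₅)^{p-1}·b^p = (2/κ₂)·((5x² + 17r²)/κ₁₇)². -/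
private lemma exists_pow_of_dvd_factorization {p : ℕ} (N : ℕ) (hN : N ≠ 0)
    (h : ∀ q, p ∣ N.factorization q) : ∃ d : ℕ, N = d ^ p := by
  refine ⟨N.factorization.prod fun q e => q ^ (e / p), ?_⟩
  rw [Finsupp.prod, ← Finset.prod_pow]
  conv_lhs => rw [← Nat.factorization_prod_pow_eq_self hN]
  rw [Finsupp.prod]
  refine Finset.prod_congr rfl fun q _ => ?_
  rw [← pow_mul, Nat.div_mul_cancel (h q)]

private lemma fact_eq_one {n q : ℕ} (hn : n ≠ 0) (hq : q.Prime) (h1 : q ∣ n)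
    (h2 : ¬ q^2 ∣ n) : n.factorization q = 1 := by
  have a := (Nat.Prime.pow_dvd_iff_le_factorization hq hn (k := 2)).not.mp h2
  have b := (Nat.Prime.pow_dvd_iff_le_factorization hq hn (k := 1)).mp (by simpa using h1)
  omega

private lemma split235 (X : ℕ) (hX : X ≠ 0) :
    ∃ M, X = 2 ^ X.factorization 2 * 5 ^ X.factorization 5 * 17 ^ X.factorization 17 * M ∧
      M ≠ 0 ∧ M.factorization 2 = 0 ∧ M.factorization 5 = 0 ∧ M.factorization 17 = 0 ∧
      ∀ q, q ≠ 2 → q ≠ 5 → q ≠ 17 → M.factorization q = X.factorization q := by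
  set X1 := X / 2 ^ X.factorization 2 with hX1def
  have hX1 : 2 ^ X.factorization 2 * X1 = X := Nat.ordProj_mul_ordCompl_eq_self X 2
  have hX10 : X1 ≠ 0 := (Nat.ordCompl_pos 2 hX).ne'
  have f1 : X1.factorization = X.factorization.erase 2 := Nat.factorization_ordCompl X 2
  set X2 := X1 / 5 ^ X1.factorization 5 with hX2def
  have hX2 : 5 ^ X1.factorization 5 * X2 = X1 := Nat.ordProj_mul_ordCompl_eq_self X1 5
  have hX20 : X2 ≠ 0 := (Nat.ordCompl_pos 5 hX10).ne'
  have f2 : X2.factorization = X1.factorization.erase 5 := Nat.factorization_ordCompl X1 5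
  set M := X2 / 17 ^ X2.factorization 17 with hMdef
  have hM : 17 ^ X2.factorization 17 * M = X2 := Nat.ordProj_mul_ordCompl_eq_self X2 17
  have hM0 : M ≠ 0 := (Nat.ordCompl_pos 17 hX20).ne'
  have f3 : M.factorization = X2.factorization.erase 17 := Nat.factorization_ordCompl X2 17
  have e15 : X1.factorization 5 = X.factorization 5 := by
    rw [f1, Finsupp.erase_ne (by norm_num)]
  have e217 : X2.factorization 17 = X.factorization 17 := by
    rw [f2, Finsupp.erase_ne (by norm_num), f1, Finsupp.erase_ne (by norm_num)]
  refine ⟨M, ?_, hM0, ?_, ?_, ?_, ?_⟩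
  · rw [← e15, ← e217]
    conv_lhs => rw [← hX1, ← hX2, ← hM]
    ring
  · rw [f3, Finsupp.erase_ne (by norm_num), f2, Finsupp.erase_ne (by norm_num), f1,
      Finsupp.erase_same]
  · rw [f3, Finsupp.erase_ne (by norm_num), f2, Finsupp.erase_same]
  · rw [f3, Finsupp.erase_same]
  · intro q h2 h5 h17
    rw [f3, Finsupp.erase_ne h17, f2, Finsupp.erase_ne h5, f1, Finsupp.erase_ne h2]

theorem ternary_equation_d_eq_two (r : ℤ) (hr : r ≠ 0) (p : ℕ) (hp : p.Prime)
    (hp7 : 7 < p) (x y : ℤ) (hxr : Int.gcd x r = 1) (hnt : (x, y) ≠ (0, 0))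
    (heq : (x - 2*r)^5 + (x - r)^5 + x^5 + (x + r)^5 + (x + 2*r)^5 = y^p)
    (κ₂ κ₅ κ₁₇ : ℤ) (hκ₂ : κ₂ = Int.gcd x 2) (hκ₅ : κ₅ = Int.gcd x 5)
    (hκ₁₇ : κ₁₇ = Int.gcd x 17) :
    ∃ a b : ℤ, a ≠ 0 ∧ b ≠ 0 ∧ IsCoprime a b ∧
      33 * κ₂^(4*p-5) * κ₅^(4*p-4) * κ₁₇^(4*p-6) * a^(4*p) +
        (17/κ₁₇) * (5/κ₅)^(p-1) * b^p =
      (2/κ₂) * ((5*x^2 + 17*r^2)/κ₁₇)^2 := by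
  have hp0 : p ≠ 0 := hp.pos.ne'
  have podd : Odd p := hp.odd_of_ne_two (by omega)
  set Q : ℤ := x^4 + 20*x^2*r^2 + 34*r^4 with hQdef
  have hQpos : 0 < Q := by rw [hQdef]; positivity
  have key : 5 * x * Q = y ^ p := by rw [← heq, hQdef]; ring
  have hx0 : x ≠ 0 := by
    rintro rfl
    have hy : y ^ p = 0 := by rw [← key]; ring
    rw [pow_eq_zero_iff hp0] at hy
    exact hnt (by rw [hy])
  have hy0 : y ≠ 0 := by
    rintro rfl
    rw [zero_pow hp0] at key
    rcases mul_eq_zero.mp key with h | h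
    · rcases mul_eq_zero.mp h with h | h
      · norm_num at h
      · exact hx0 h
    · exact absurd h hQpos.ne'
  have hxr' : IsCoprime x r := Int.isCoprime_iff_gcd_eq_one.mpr hxr
  set X := x.natAbs with hXdef
  set QN := Q.natAbs with hQNdef
  set Y := y.natAbs with hYdef
  have hQN : (QN : ℤ) = Q := Int.natAbs_of_nonneg hQpos.le
  have hX0 : X ≠ 0 := Int.natAbs_ne_zero.mpr hx0
  have hQN0 : QN ≠ 0 := Int.natAbs_ne_zero.mpr hQpos.ne'
  have hY0 : Y ≠ 0 := Int.natAbs_ne_zero.mpr hy0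
  have hdX : ∀ q : ℕ, (q:ℤ) ∣ x ↔ q ∣ X := fun q => by
    rw [← Int.natAbs_dvd_natAbs]; norm_num; exact Iff.rfl
  have hdQ : ∀ q : ℕ, (q:ℤ) ∣ Q ↔ q ∣ QN := fun q => by
    rw [← Int.natAbs_dvd_natAbs]; norm_num; exact Iff.rfl
  have KEY : 5 * X * QN = Y ^ p := by
    have h := congrArg Int.natAbs key
    simpa [Int.natAbs_mul, Int.natAbs_pow] using h
  have hnotr : ∀ q : ℕ, q.Prime → (q:ℤ) ∣ x → ¬ (q:ℤ) ∣ r := by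
    intro q hq hqx hqr
    have hqp : Prime (q:ℤ) := Int.prime_iff_natAbs_prime.mpr (by simpa)
    exact hqp.not_unit (hxr'.isUnit_of_dvd' hqx hqr)
  -- facts about QN's small prime factorizations
  have F1 : ¬ 2 ∣ X → ¬ 2 ∣ QN := by
    intro h2 hQ2
    apply h2
    rw [← hdX 2]
    have h2Q : (2:ℤ) ∣ Q := (hdQ 2).mpr hQ2
    have hx4 : (2:ℤ) ∣ x^4 := by
      have e : x^4 = Q - 2*(10*x^2*r^2 + 17*r^4) := by rw [hQdef]; ring
      rw [e]; exact dvd_sub h2Q ⟨_, rfl⟩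
    exact Int.prime_two.dvd_of_dvd_pow hx4
  have F2 : 2 ∣ X → QN.factorization 2 = 1 := by
    intro h2
    have h2x : (2:ℤ) ∣ x := (hdX 2).mpr h2
    have hr2 : ¬ (2:ℤ) ∣ r := hnotr 2 Nat.prime_two h2x
    obtain ⟨x', hx'⟩ := h2x
    apply fact_eq_one hQN0 Nat.prime_two
    · rw [← hdQ 2]
      refine ⟨8*x'^4 + 40*x'^2*r^2 + 17*r^4, ?_⟩
      rw [hQdef, hx']; ring
    · intro h4
      have h4' : (4:ℤ) ∣ Q := by
        have : ((2^2 : ℕ) : ℤ) ∣ Q := (hdQ 4).mpr (by norm_num at h4 ⊢; exact h4)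
        exact_mod_cast this
      have h34 : (4:ℤ) ∣ 34*r^4 := by
        have e : 34*r^4 = Q - 4*(4*x'^4 + 20*x'^2*r^2) := by rw [hQdef, hx']; ring
        rw [e]; exact dvd_sub h4' ⟨_, rfl⟩
      obtain ⟨k, hk⟩ := h34
      have h17r : (2:ℤ) ∣ 17 * r^4 := ⟨k, by linarith⟩
      rcases Int.prime_two.dvd_mul.mp h17r with h | h
      · norm_num at h
      · exact hr2 (Int.prime_two.dvd_of_dvd_pow h)
  have F3 : 5 ∣ X → ¬ 5 ∣ QN := by
    intro h5 hQ5
    have h5x : (5:ℤ) ∣ x := (hdX 5).mpr h5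
    have hr5 : ¬ (5:ℤ) ∣ r := hnotr 5 (by norm_num) h5x
    have h5Q : (5:ℤ) ∣ Q := (hdQ 5).mpr hQ5
    have h34 : (5:ℤ) ∣ 34*r^4 := by
      have e : 34*r^4 = Q - x^2*(x^2 + 20*r^2) := by rw [hQdef]; ring
      rw [e]
      exact dvd_sub h5Q (Dvd.dvd.mul_right (dvd_pow h5x two_ne_zero) _)
    have hp5 : Prime (5:ℤ) := Int.prime_iff_natAbs_prime.mpr (by norm_num)
    rcases hp5.dvd_mul.mp h34 with h | h
    · norm_num at h
    · exact hr5 (hp5.dvd_of_dvd_pow h)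
  have F4 : 17 ∣ X → QN.factorization 17 = 1 := by
    intro h17
    have h17x : (17:ℤ) ∣ x := (hdX 17).mpr h17
    have hr17 : ¬ (17:ℤ) ∣ r := hnotr 17 (by norm_num) h17x
    have hp17 : Prime (17:ℤ) := Int.prime_iff_natAbs_prime.mpr (by norm_num)
    obtain ⟨x', hx'⟩ := h17x
    apply fact_eq_one hQN0 (by norm_num)
    · rw [← hdQ 17]
      refine ⟨4913*x'^4 + 340*x'^2*r^2 + 2*r^4, ?_⟩
      rw [hQdef, hx']; push_cast; ring
    · intro h289
      have h289' : (289:ℤ) ∣ Q := by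
        have : ((17^2 : ℕ) : ℤ) ∣ Q := (hdQ 289).mpr (by norm_num at h289 ⊢; exact h289)
        exact_mod_cast this
      have h34 : (289:ℤ) ∣ 34*r^4 := by
        have e : 34*r^4 = Q - 289*(289*x'^4 + 20*x'^2*r^2) := by rw [hQdef, hx']; ring
        rw [e]; exact dvd_sub h289' ⟨_, rfl⟩
      obtain ⟨k, hk⟩ := h34
      have h2r : (17:ℤ) ∣ 2 * r^4 := ⟨k, by linarith⟩
      rcases hp17.dvd_mul.mp h2r with h | h
      · norm_num at h
      · exact hr17 (hp17.dvd_of_dvd_pow h)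
  have F5 : ¬ 17 ∣ X → ¬ 17 ∣ QN := by
    intro h17 hQ17
    have hx17 : ((x : ZMod 17)) ≠ 0 := by
      rw [Ne, ZMod.intCast_zmod_eq_zero_iff_dvd]
      intro h
      exact h17 ((hdX 17).mp (by exact_mod_cast h))
    have hQ17' : ((Q : ZMod 17)) = 0 := by
      rw [ZMod.intCast_zmod_eq_zero_iff_dvd]
      exact_mod_cast (hdQ 17).mpr hQ17
    rw [hQdef] at hQ17'
    push_cast at hQ17'
    revert hQ17'
    generalize (x : ZMod 17) = u at hx17
    generalize (r : ZMod 17) = v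
    revert hx17
    revert u v
    decide
  have HVAL : ∀ q : ℕ, p ∣ (if q = 5 then 1 else 0) + X.factorization q + QN.factorization q := by
    intro q
    have h5 : (5:ℕ) ≠ 0 := by norm_num
    have e1 : (5 * X * QN).factorization q
        = (if q = 5 then 1 else 0) + X.factorization q + QN.factorization q := by
      rw [Nat.factorization_mul (mul_ne_zero h5 hX0) hQN0, Nat.factorization_mul h5 hX0]
      simp only [Finsupp.coe_add, Pi.add_apply]
      congr 2
      rw [Nat.Prime.factorization (by norm_num)]
      simp [Finsupp.single_apply, eq_comm]
    have e2 : (Y ^ p).factorization q = p * Y.factorization q := by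
      rw [Nat.factorization_pow]; rfl
    rw [← e1, KEY, e2]
    exact Dvd.intro _ rfl
  have F6 : ∀ q : ℕ, q.Prime → q ∣ X → q ∣ QN → q = 2 ∨ q = 17 := by
    intro q hq hqX hqQ
    have hqx : (q:ℤ) ∣ x := (hdX q).mpr hqX
    have hqQ' : (q:ℤ) ∣ Q := (hdQ q).mpr hqQ
    have h34 : (q:ℤ) ∣ 34 * r^4 := by
      have e : 34*r^4 = Q - x^2*(x^2+20*r^2) := by rw [hQdef]; ring
      rw [e]
      exact dvd_sub hqQ' (Dvd.dvd.mul_right (dvd_pow hqx two_ne_zero) _)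
    have hqp : Prime (q:ℤ) := Int.prime_iff_natAbs_prime.mpr (by simpa)
    rcases hqp.dvd_mul.mp h34 with h | h
    · have h34n : q ∣ 34 := by exact_mod_cast h
      have hle := Nat.le_of_dvd (by norm_num) h34n
      have h2le := hq.two_le
      interval_cases q <;> revert hq h34n <;> decide
    · exact absurd (hqp.dvd_of_dvd_pow h) (hnotr q hq hqx)
  -- split X and QN
  obtain ⟨M, hMX, hM0, hM2, hM5, hM17, hMq⟩ := split235 X hX0
  obtain ⟨N, hNQ, hN0, hN2, hN5, hN17, hNq⟩ := split235 QN hQN0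
  have hppM : ∀ q, p ∣ M.factorization q := by
    intro q
    by_cases hq : q.Prime
    · rcases eq_or_ne q 2 with rfl | q2
      · simp [hM2]
      rcases eq_or_ne q 5 with rfl | q5
      · simp [hM5]
      rcases eq_or_ne q 17 with rfl | q17
      · simp [hM17]
      rw [hMq q q2 q5 q17]
      have hv := HVAL q
      rw [if_neg q5] at hv
      by_cases hqX : q ∣ X
      · by_cases hqQ : q ∣ QN
        · rcases F6 q hq hqX hqQ with rfl | rfl
          exacts [absurd rfl q2, absurd rfl q17]
        · have h0 : QN.factorization q = 0 := Nat.factorization_eq_zero_of_not_dvd hqQ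
          simpa [h0] using hv
      · have h0 : X.factorization q = 0 := Nat.factorization_eq_zero_of_not_dvd hqX
        simp [h0]
    · simp [Nat.factorization_eq_zero_of_not_prime _ hq]
  have hppN : ∀ q, p ∣ N.factorization q := by
    intro q
    by_cases hq : q.Prime
    · rcases eq_or_ne q 2 with rfl | q2
      · simp [hN2]
      rcases eq_or_ne q 5 with rfl | q5
      · simp [hN5]
      rcases eq_or_ne q 17 with rfl | q17
      · simp [hN17]
      rw [hNq q q2 q5 q17]
      have hv := HVAL q
      rw [if_neg q5] at hv
      by_cases hqX : q ∣ X
      · by_cases hqQ : q ∣ QN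
        · rcases F6 q hq hqX hqQ with rfl | rfl
          exacts [absurd rfl q2, absurd rfl q17]
        · have h0 : QN.factorization q = 0 := Nat.factorization_eq_zero_of_not_dvd hqQ
          simp [h0]
      · have h0 : X.factorization q = 0 := Nat.factorization_eq_zero_of_not_dvd hqX
        simpa [h0] using hv
    · simp [Nat.factorization_eq_zero_of_not_prime _ hq]
  obtain ⟨A₀, hA₀⟩ := exists_pow_of_dvd_factorization M hM0 hppM
  obtain ⟨B₀, hB₀⟩ := exists_pow_of_dvd_factorization N hN0 hppN
  have hA₀0 : A₀ ≠ 0 := by rintro rfl; rw [zero_pow hp0] at hA₀; exact hM0 hA₀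
  have hB₀0 : B₀ ≠ 0 := by rintro rfl; rw [zero_pow hp0] at hB₀; exact hN0 hB₀
  -- exponents at the special primes
  have hα : ∃ α', X.factorization 2 = (if 2 ∣ X then p - 1 else 0) + p * α' := by
    by_cases h2 : 2 ∣ X
    · have hfq2 := F2 h2
      have hv := HVAL 2
      rw [if_neg (by norm_num), hfq2] at hv
      have hpos : 0 < X.factorization 2 :=
        Nat.Prime.factorization_pos_of_dvd Nat.prime_two hX0 h2
      obtain ⟨t, ht⟩ := hv
      rcases t with _ | s
      · omega
      · refine ⟨s, ?_⟩
        have hps : p * (s+1) = p * s + p := by ring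
        rw [hps] at ht
        simp only [if_pos h2]
        generalize p * s = u at ht ⊢
        omega
    · exact ⟨0, by simp [h2, Nat.factorization_eq_zero_of_not_dvd h2]⟩
  have hfQ2 : QN.factorization 2 = (if 2 ∣ X then 1 else 0) := by
    by_cases h2 : 2 ∣ X
    · simp [h2, F2 h2]
    · simp [h2, Nat.factorization_eq_zero_of_not_dvd (F1 h2)]
  have hγ : ∃ γ', X.factorization 17 = (if 17 ∣ X then p - 1 else 0) + p * γ' := by
    by_cases h17 : 17 ∣ X
    · have hfq17 := F4 h17
      have hv := HVAL 17
      rw [if_neg (by norm_num), hfq17] at hv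
      have hpos : 0 < X.factorization 17 :=
        Nat.Prime.factorization_pos_of_dvd (by norm_num) hX0 h17
      obtain ⟨t, ht⟩ := hv
      rcases t with _ | s
      · omega
      · refine ⟨s, ?_⟩
        have hps : p * (s+1) = p * s + p := by ring
        rw [hps] at ht
        simp only [if_pos h17]
        generalize p * s = u at ht ⊢
        omega
    · exact ⟨0, by simp [h17, Nat.factorization_eq_zero_of_not_dvd h17]⟩
  have hfQ17 : QN.factorization 17 = (if 17 ∣ X then 1 else 0) := by
    by_cases h17 : 17 ∣ X
    · simp [h17, F4 h17]
    · simp [h17, Nat.factorization_eq_zero_of_not_dvd (F5 h17)]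
  have hβ : ∃ β', X.factorization 5 = (if 5 ∣ X then p - 1 else 0) + p * β' := by
    by_cases h5 : 5 ∣ X
    · have hfq5 : QN.factorization 5 = 0 :=
        Nat.factorization_eq_zero_of_not_dvd (F3 h5)
      have hv := HVAL 5
      rw [if_pos rfl, hfq5] at hv
      obtain ⟨t, ht⟩ := hv
      rcases t with _ | s
      · omega
      · refine ⟨s, ?_⟩
        have hps : p * (s+1) = p * s + p := by ring
        rw [hps] at ht
        simp only [if_pos h5]
        generalize p * s = u at ht ⊢
        omega
    · exact ⟨0, by simp [h5, Nat.factorization_eq_zero_of_not_dvd h5]⟩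
  have hε : ∃ ε', QN.factorization 5 = (if 5 ∣ X then 0 else p - 1) + p * ε' := by
    by_cases h5 : 5 ∣ X
    · exact ⟨0, by simp [h5, Nat.factorization_eq_zero_of_not_dvd (F3 h5)]⟩
    · have hfx5 : X.factorization 5 = 0 := Nat.factorization_eq_zero_of_not_dvd h5
      have hv := HVAL 5
      rw [if_pos rfl, hfx5] at hv
      obtain ⟨t, ht⟩ := hv
      rcases t with _ | s
      · omega
      · refine ⟨s, ?_⟩
        have hps : p * (s+1) = p * s + p := by ring
        rw [hps] at ht
        simp only [if_neg h5]
        generalize p * s = u at ht ⊢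
        omega
  obtain ⟨α', hα'⟩ := hα
  obtain ⟨β', hβ'⟩ := hβ
  obtain ⟨γ', hγ'⟩ := hγ
  obtain ⟨ε', hε'⟩ := hε
  -- the assembled decompositions
  set A : ℕ := 2^α' * 5^β' * 17^γ' * A₀ with hAdef
  set B : ℕ := 5^ε' * B₀ with hBdef
  set k2 : ℕ := if 2 ∣ X then 2 else 1 with hk2def
  set k5 : ℕ := if 5 ∣ X then 5 else 1 with hk5def
  set k17 : ℕ := if 17 ∣ X then 17 else 1 with hk17def
  set l5 : ℕ := if 5 ∣ X then 1 else 5 with hl5def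
  have pw2 : 2 ^ ((if 2 ∣ X then p - 1 else 0) + p * α') = k2^(p-1) * (2^α')^p := by
    by_cases h : 2 ∣ X <;> simp [hk2def, h, pow_add, pow_mul] <;> ring
  have pw5 : 5 ^ ((if 5 ∣ X then p - 1 else 0) + p * β') = k5^(p-1) * (5^β')^p := by
    by_cases h : 5 ∣ X <;> simp [hk5def, h, pow_add, pow_mul] <;> ring
  have pw17 : 17 ^ ((if 17 ∣ X then p - 1 else 0) + p * γ') = k17^(p-1) * (17^γ')^p := by
    by_cases h : 17 ∣ X <;> simp [hk17def, h, pow_add, pow_mul] <;> ring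
  have pwq5 : 5 ^ ((if 5 ∣ X then 0 else p - 1) + p * ε') = l5^(p-1) * (5^ε')^p := by
    by_cases h : 5 ∣ X <;> simp [hl5def, h, pow_add, pow_mul] <;> ring
  have XE : X = (k2 * k5 * k17)^(p-1) * A^p := by
    rw [hMX, hA₀, hα', hβ', hγ', pw2, pw5, pw17, hAdef]
    rw [mul_pow, mul_pow, mul_pow, mul_pow, mul_pow]
    ring
  have QE : QN = k2 * k17 * l5^(p-1) * B^p := by
    have e2 : (2:ℕ) ^ QN.factorization 2 = k2 := by
      rw [hfQ2, hk2def]; by_cases h : 2 ∣ X <;> simp [h]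
    have e17 : (17:ℕ) ^ QN.factorization 17 = k17 := by
      rw [hfQ17, hk17def]; by_cases h : 17 ∣ X <;> simp [h]
    rw [hNQ, hB₀, e2, e17, hε', pwq5, hBdef, mul_pow]
    ring
  have hA0 : A ≠ 0 := by
    rw [hAdef]
    positivity
  have hB0 : B ≠ 0 := by
    rw [hBdef]
    positivity
  -- coprimality of A and B
  have hABcop : Nat.Coprime A B := by
    by_contra hc
    have hg0 : Nat.gcd A B ≠ 0 := fun h => hA0 (Nat.eq_zero_of_gcd_eq_zero_left h)
    have hg1 : Nat.gcd A B ≠ 1 := hc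
    have hg2 : 2 ≤ Nat.gcd A B := by omega
    set g := Nat.gcd A B with hgdef
    have hq : (g.minFac).Prime := Nat.minFac_prime (by omega)
    set q := g.minFac with hqdef
    have hqA : q ∣ A := (Nat.minFac_dvd g).trans (Nat.gcd_dvd_left A B)
    have hqB : q ∣ B := (Nat.minFac_dvd g).trans (Nat.gcd_dvd_right A B)
    have hqX : q ∣ X := by
      rw [XE]
      exact Dvd.dvd.mul_left (hqA.trans (dvd_pow_self A hp0)) _
    have hqQ : q ∣ QN := by
      rw [QE]
      exact Dvd.dvd.mul_left (hqB.trans (dvd_pow_self B hp0)) _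
    have hBpQ : B ^ p ∣ QN := ⟨k2 * k17 * l5^(p-1), by rw [QE]; ring⟩
    rcases F6 q hq hqX hqQ with h2 | h17
    · have hfq2 : QN.factorization 2 = 1 := F2 (h2 ▸ hqX)
      have h2p : (2:ℕ) ^ p ∣ QN :=
        (pow_dvd_pow_of_dvd (h2 ▸ hqB) p).trans hBpQ
      have hle := (Nat.Prime.pow_dvd_iff_le_factorization Nat.prime_two hQN0).mp h2p
      omega
    · have hfq17 : QN.factorization 17 = 1 := F4 (h17 ▸ hqX)
      have h17p : (17:ℕ) ^ p ∣ QN :=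
        (pow_dvd_pow_of_dvd (h17 ▸ hqB) p).trans hBpQ
      have hle := (Nat.Prime.pow_dvd_iff_le_factorization (by norm_num) hQN0).mp h17p
      omega
  -- kappa values
  have hk2 : κ₂ = (k2 : ℤ) := by
    rw [hκ₂, hk2def]
    have e : Int.gcd x 2 = Nat.gcd X 2 := rfl
    rw [e, Nat.gcd_comm]
    by_cases h : 2 ∣ X
    · simp [h, Nat.gcd_eq_left h]
    · simp [h, (Nat.Prime.coprime_iff_not_dvd Nat.prime_two).mpr h]
  have hk5 : κ₅ = (k5 : ℤ) := by
    rw [hκ₅, hk5def]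
    have e : Int.gcd x 5 = Nat.gcd X 5 := rfl
    rw [e, Nat.gcd_comm]
    by_cases h : 5 ∣ X
    · simp [h, Nat.gcd_eq_left h]
    · simp [h, (Nat.Prime.coprime_iff_not_dvd (by norm_num)).mpr h]
  have hk17 : κ₁₇ = (k17 : ℤ) := by
    rw [hκ₁₇, hk17def]
    have e : Int.gcd x 17 = Nat.gcd X 17 := rfl
    rw [e, Nat.gcd_comm]
    by_cases h : 17 ∣ X
    · simp [h, Nat.gcd_eq_left h]
    · simp [h, (Nat.Prime.coprime_iff_not_dvd (by norm_num)).mpr h]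
  -- sign
  obtain ⟨s, hs, hsx⟩ : ∃ s : ℤ, (s = 1 ∨ s = -1) ∧ x = s * (X : ℤ) := by
    rcases le_or_gt 0 x with h | h
    · exact ⟨1, Or.inl rfl, by rw [one_mul, hXdef, Int.natAbs_of_nonneg h]⟩
    · refine ⟨-1, Or.inr rfl, ?_⟩
      rw [hXdef, ← Int.abs_eq_natAbs, abs_of_neg h]; ring
  have ha0 : s * (A:ℤ) ≠ 0 :=
    mul_ne_zero (by rcases hs with rfl | rfl <;> norm_num)
      (Int.natCast_ne_zero.mpr hA0)
  have hb0 : ((B:ℕ):ℤ) ≠ 0 := Int.natCast_ne_zero.mpr hB0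
  have hab : IsCoprime (s * (A:ℤ)) ((B:ℕ):ℤ) := by
    have hAB : IsCoprime ((A:ℕ):ℤ) ((B:ℕ):ℤ) := by
      rw [Int.isCoprime_iff_gcd_eq_one]
      simpa [Int.gcd] using hABcop
    rcases hs with rfl | rfl
    · simpa using hAB
    · simpa using hAB.neg_left
  have hsp : s ^ p = s := by
    rcases hs with rfl | rfl
    · simp
    · simp [podd.neg_one_pow]
  have hxa : x = (κ₂*κ₅*κ₁₇)^(p-1) * (s*(A:ℤ))^p := by
    have hXcast : ((X:ℕ):ℤ) = (κ₂*κ₅*κ₁₇)^(p-1) * ((A:ℕ):ℤ)^p := by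
      rw [hk2, hk5, hk17]
      exact_mod_cast congrArg (Nat.cast : ℕ → ℤ) XE
    rw [hsx, hXcast]
    linear_combination (-(κ₂*κ₅*κ₁₇)^(p-1) * ((A:ℕ):ℤ)^p) * hsp
  have hQb : Q = κ₂ * κ₁₇ * (5/κ₅)^(p-1) * ((B:ℕ):ℤ)^p := by
    have hl5 : ((l5 : ℕ) : ℤ) = 5/κ₅ := by
      rw [hl5def, hk5]
      by_cases h : 5 ∣ X <;> simp [h, hk5def] <;> norm_num
    have hQcast : ((QN:ℕ):ℤ) = κ₂ * κ₁₇ * ((l5:ℕ):ℤ)^(p-1) * ((B:ℕ):ℤ)^p := by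
      rw [hk2, hk17]
      exact_mod_cast congrArg (Nat.cast : ℕ → ℤ) QE
    rw [← hQN, hQcast, hl5]
  -- final assembly
  refine ⟨s * (A:ℤ), ((B:ℕ):ℤ), ha0, hb0, hab, ?_⟩
  obtain ⟨c, hc⟩ : ∃ c, p = c + 8 := ⟨p - 8, by omega⟩
  subst hc
  -- division facts
  have d2 : κ₂ * (2/κ₂) = 2 := Int.mul_ediv_cancel' (by rw [hκ₂]; exact Int.gcd_dvd_right _ _)
  have d5 : κ₅ * (5/κ₅) = 5 := Int.mul_ediv_cancel' (by rw [hκ₅]; exact Int.gcd_dvd_right _ _)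
  have d17 : κ₁₇ * (17/κ₁₇) = 17 :=
    Int.mul_ediv_cancel' (by rw [hκ₁₇]; exact Int.gcd_dvd_right _ _)
  have hdvd17x : κ₁₇ ∣ x := by rw [hκ₁₇]; exact Int.gcd_dvd_left _ _
  have hdvd17 : κ₁₇ ∣ 17 := by rw [hκ₁₇]; exact Int.gcd_dvd_right _ _
  have dz : κ₁₇ * ((5*x^2 + 17*r^2)/κ₁₇) = 5*x^2 + 17*r^2 := by
    refine Int.mul_ediv_cancel' (dvd_add ?_ ?_)
    · exact Dvd.dvd.mul_left (dvd_pow hdvd17x two_ne_zero) 5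
    · exact Dvd.dvd.mul_right hdvd17 (r^2)
  have hκ₂0 : κ₂ ≠ 0 := by
    rw [hk2, hk2def]; by_cases h : 2 ∣ X <;> simp [h]
  have hκ₁₇0 : κ₁₇ ≠ 0 := by
    rw [hk17, hk17def]; by_cases h : 17 ∣ X <;> simp [h]
  set j2 := (2:ℤ)/κ₂ with hj2def
  set j5 := (5:ℤ)/κ₅ with hj5def
  set j17 := (17:ℤ)/κ₁₇ with hj17def
  set z := (5*x^2 + 17*r^2)/κ₁₇ with hzdef
  have hx4 : x^4 = (κ₂*κ₅*κ₁₇)^(4*c+28) * (s*(A:ℤ))^(4*(c+8)) := by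
    rw [hxa]
    rw [show (c+8)-1 = c+7 from by omega]
    ring
  rw [show (c+8)-1 = c+7 from by omega] at hQb
  rw [show 4*(c+8)-5 = 4*c+27 from by omega, show 4*(c+8)-4 = 4*c+28 from by omega,
    show 4*(c+8)-6 = 4*c+26 from by omega, show (c+8)-1 = c+7 from by omega]
  apply mul_left_cancel₀ (mul_ne_zero hκ₂0 (pow_ne_zero 2 hκ₁₇0) :
    κ₂ * κ₁₇^2 ≠ 0)
  linear_combination (-33:ℤ) * hx4
    + (κ₂*κ₁₇*j5^(c+7)*((B:ℕ):ℤ)^(c+8)) * d17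
    + (-17:ℤ) * hQb + (17:ℤ) * hQdef
    + (-(κ₁₇^2*z^2)) * d2
    + (-2*(κ₁₇*z + 5*x^2 + 17*r^2)) * dz
end

section
/- Let r be a nonzero integer, p > 19 a prime, and suppose integers x, y with gcd(x,r) = 1 and (x,y) ≠ (0,0) satisfy (x-3r)^5 + (x-2r)^5 + (x-r)^5 + x^5 + (x+r)^5 + (x+2r)^5 + (x+3r)^5 = y^p. Set κ₂ = gcd(x,2), κ₅ = gcd(x,5), κ₇ = gcd(x,7). Then there exist nonzero coprime integers a, b such that κ₂^{4p-10}·κ₅^{4p-5}·κ₇^{4p-10}·13·a^{4p} + (7b/κ₇)^p = (5/κ₅)·((2x² + 14r²)/(κ₂·κ₇))². -/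
private lemma gcd_prime_cases {q : ℕ} (hq : q.Prime) (x : ℤ) :
    ((q:ℤ) ∣ x ∧ (Int.gcd x (q:ℤ) : ℤ) = q) ∨ (¬(q:ℤ) ∣ x ∧ (Int.gcd x (q:ℤ) : ℤ) = 1) := by
  have hd : (q:ℤ) ∣ x ↔ q ∣ x.natAbs := by
    exact Int.natCast_dvd
  by_cases h : (q:ℤ) ∣ x
  · left
    refine ⟨h, ?_⟩
    have h' : q ∣ x.natAbs := hd.mp h
    have : Int.gcd x (q:ℤ) = q := by
      rw [Int.gcd, Int.natAbs_natCast]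
      exact Nat.dvd_antisymm (Nat.gcd_dvd_right _ _) (Nat.dvd_gcd h' dvd_rfl)
    rw [this]
  · right
    refine ⟨h, ?_⟩
    have h' : ¬ q ∣ x.natAbs := fun hh => h (hd.mpr hh)
    have : Int.gcd x (q:ℤ) = 1 := by
      rw [Int.gcd, Int.natAbs_natCast]
      exact Nat.coprime_comm.mp ((Nat.Prime.coprime_iff_not_dvd hq).mpr h')
    rw [this]
    norm_num


private lemma notdvd2 (r V m t : ℤ) (hgcd : Int.gcd (2*t) r = 1)
    (hkV : (4*m) * V = 7*((2*t)^4+40*(2*t)^2*r^2+140*r^4)) : ¬ (2:ℤ) ∣ V := by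
  rintro ⟨w, rfl⟩
  have key : 2*(m*w) = 7*(4*t^4+40*t^2*r^2+35*r^4) := by
    apply mul_left_cancel₀ (a := (4:ℤ)) (by norm_num)
    linear_combination hkV
  have h245 : (2:ℤ) ∣ 245*r^4 := ⟨m*w - 14*t^4 - 140*t^2*r^2, by linarith⟩
  have h2r4 : (2:ℤ) ∣ r^4 := by
    rcases (Int.prime_two.dvd_mul.mp h245) with h | h
    · norm_num at h
    · exact h
  have h2r : (2:ℤ) ∣ r := Int.prime_two.dvd_of_dvd_pow h2r4
  have : (2:ℤ) ∣ (Int.gcd (2*t) r : ℤ) := Int.dvd_coe_gcd ⟨t, by ring⟩ h2r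
  rw [hgcd] at this
  norm_num at this

private lemma notdvd5 (r V m t : ℤ) (hgcd : Int.gcd (5*t) r = 1)
    (hkV : (5*m) * V = 7*((5*t)^4+40*(5*t)^2*r^2+140*r^4)) : ¬ (5:ℤ) ∣ V := by
  rintro ⟨w, rfl⟩
  have hp5 : Prime (5:ℤ) := by norm_num
  have key : 5*(m*w) = 7*(125*t^4+200*t^2*r^2+28*r^4) := by
    apply mul_left_cancel₀ (a := (5:ℤ)) (by norm_num)
    linear_combination hkV
  have h196 : (5:ℤ) ∣ 196*r^4 := ⟨m*w - 175*t^4 - 280*t^2*r^2, by linarith⟩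
  have h5r4 : (5:ℤ) ∣ r^4 := by
    rcases (hp5.dvd_mul.mp h196) with h | h
    · norm_num at h
    · exact h
  have h5r : (5:ℤ) ∣ r := hp5.dvd_of_dvd_pow h5r4
  have : (5:ℤ) ∣ (Int.gcd (5*t) r : ℤ) := Int.dvd_coe_gcd ⟨t, by ring⟩ h5r
  rw [hgcd] at this
  norm_num at this

private lemma notdvd7 (r V m t : ℤ) (hgcd : Int.gcd (7*t) r = 1)
    (hkV : (49*m) * V = 7*((7*t)^4+40*(7*t)^2*r^2+140*r^4)) : ¬ (7:ℤ) ∣ V := by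
  rintro ⟨w, rfl⟩
  have hp7 : Prime (7:ℤ) := by norm_num
  have key : 7*(m*w) = 343*t^4+280*t^2*r^2+20*r^4 := by
    apply mul_left_cancel₀ (a := (49:ℤ)) (by norm_num)
    linear_combination hkV
  have h20 : (7:ℤ) ∣ 20*r^4 := ⟨m*w - 49*t^4 - 40*t^2*r^2, by linarith⟩
  have h7r4 : (7:ℤ) ∣ r^4 := by
    rcases (hp7.dvd_mul.mp h20) with h | h
    · norm_num at h
    · exact h
  have h7r : (7:ℤ) ∣ r := hp7.dvd_of_dvd_pow h7r4
  have : (7:ℤ) ∣ (Int.gcd (7*t) r : ℤ) := Int.dvd_coe_gcd ⟨t, by ring⟩ h7r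
  rw [hgcd] at this
  norm_num at this


private lemma coprime_key (x r k V : ℤ) (hxr : Int.gcd x r = 1)
    (hkV : k * V = 7*(x^4+40*x^2*r^2+140*r^4))
    (hkx : ∀ q : ℤ, Prime q → q ∣ k → q ∣ x)
    (h2 : (2:ℤ) ∣ x → ¬ (2:ℤ) ∣ V)
    (h5 : (5:ℤ) ∣ x → ¬ (5:ℤ) ∣ V)
    (h7 : (7:ℤ) ∣ x → ¬ (7:ℤ) ∣ V) :
    IsCoprime (x*k) V := by
  rw [Int.isCoprime_iff_gcd_eq_one]
  by_contra hg
  obtain ⟨q, hq, hqd⟩ := Nat.exists_prime_and_dvd hg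
  have hqz : Prime (q:ℤ) := Nat.prime_iff_prime_int.mp hq
  have hgU : ((Int.gcd (x*k) V : ℕ) : ℤ) ∣ x*k := Int.gcd_dvd_left _ _
  have hgV : ((Int.gcd (x*k) V : ℕ) : ℤ) ∣ V := Int.gcd_dvd_right _ _
  have hqU : (q:ℤ) ∣ x*k := dvd_trans (Int.natCast_dvd_natCast.mpr hqd) hgU
  have hqV : (q:ℤ) ∣ V := dvd_trans (Int.natCast_dvd_natCast.mpr hqd) hgV
  have hqx : (q:ℤ) ∣ x := by
    rcases hqz.dvd_mul.mp hqU with h | h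
    · exact h
    · exact hkx _ hqz h
  have hq7Q : (q:ℤ) ∣ 7*(x^4+40*x^2*r^2+140*r^4) := hkV ▸ Dvd.dvd.mul_left hqV k
  have hqxpart : (q:ℤ) ∣ x*(7*x^3+280*x*r^2) := Dvd.dvd.mul_right hqx _
  have hq980 : (q:ℤ) ∣ 980*r^4 := by
    obtain ⟨s, hs⟩ := hq7Q
    obtain ⟨u, hu⟩ := hqxpart
    exact ⟨s - u, by linarith⟩
  have hqr : ¬ (q:ℤ) ∣ r := by
    intro h
    have : (q:ℤ) ∣ (Int.gcd x r : ℤ) := Int.dvd_coe_gcd hqx h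
    rw [hxr] at this
    exact hqz.not_unit (isUnit_of_dvd_one this)
  have hq980' : (q:ℤ) ∣ 980 := by
    rcases hqz.dvd_mul.mp hq980 with h | h
    · exact h
    · exact absurd (hqz.dvd_of_dvd_pow h) hqr
  have hq257 : q = 2 ∨ q = 5 ∨ q = 7 := by
    have h980 : (q:ℤ) ∣ 4 * 245 := by norm_num at hq980' ⊢; exact hq980'
    have conv : ∀ m : ℕ, m.Prime → (q:ℤ) ∣ (m:ℤ) → q = m := fun m hm h =>
      (Nat.prime_dvd_prime_iff_eq hq hm).mp (Int.natCast_dvd_natCast.mp h)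
    rcases hqz.dvd_mul.mp h980 with h | h
    · left
      have : (q:ℤ) ∣ 2 := hqz.dvd_of_dvd_pow (show (q:ℤ) ∣ 2^2 by norm_num; exact h)
      exact conv 2 Nat.prime_two (by exact_mod_cast this)
    · rcases hqz.dvd_mul.mp (show (q:ℤ) ∣ 5 * 49 by norm_num; exact h) with h' | h'
      · right; left
        exact conv 5 (by norm_num) (by exact_mod_cast h')
      · right; right
        have : (q:ℤ) ∣ 7 := hqz.dvd_of_dvd_pow (show (q:ℤ) ∣ 7^2 by norm_num; exact h')
        exact conv 7 (by norm_num) (by exact_mod_cast this)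
  rcases hq257 with rfl | rfl | rfl
  · exact h2 (by exact_mod_cast hqx) (by exact_mod_cast hqV)
  · exact h5 (by exact_mod_cast hqx) (by exact_mod_cast hqV)
  · exact h7 (by exact_mod_cast hqx) (by exact_mod_cast hqV)

private lemma main_aux (x r y V W κ₂ κ₅ κ₇ : ℤ) (p : ℕ) (hp : p.Prime) (hp19 : 19 < p)
    (hxr : Int.gcd x r = 1) (hr : r ≠ 0) (hx0 : x ≠ 0)
    (hy7 : 7*x*(x^4+40*x^2*r^2+140*r^4) = y^p)
    (hkV : (κ₂^2*κ₅*κ₇^2) * V = 7*(x^4+40*x^2*r^2+140*r^4))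
    (hW : (κ₂*κ₇)*W = 2*x^2+14*r^2)
    (h2x : κ₂ ∣ x) (h5x : κ₅ ∣ x) (h7x : κ₇ ∣ x)
    (hP2 : κ₂ = 1 ∨ Prime κ₂) (hP5 : κ₅ = 1 ∨ Prime κ₅) (hP7 : κ₇ = 1 ∨ Prime κ₇)
    (hc25 : IsCoprime κ₂ κ₅) (hc27 : IsCoprime κ₂ κ₇) (hc57 : IsCoprime κ₅ κ₇)
    (h5div : κ₅ * (5/κ₅) = 5)
    (h7or : κ₇ = 7 ∨ (κ₇ = 1 ∧ ¬ (7:ℤ) ∣ κ₂^2*κ₅))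
    (h2V : (2:ℤ) ∣ x → ¬ (2:ℤ) ∣ V)
    (h5V : (5:ℤ) ∣ x → ¬ (5:ℤ) ∣ V)
    (h7V : (7:ℤ) ∣ x → ¬ (7:ℤ) ∣ V) :
    ∃ a b : ℤ, a ≠ 0 ∧ b ≠ 0 ∧ IsCoprime a b ∧
      κ₂^(4*p-10) * κ₅^(4*p-5) * κ₇^(4*p-10) * 13 * a^(4*p) + (7*b/κ₇)^p =
        (5/κ₅) * ((2*x^2 + 14*r^2)/(κ₂*κ₇))^2 := by
  have hp0 : 0 < p := hp.pos
  have hpodd : Odd p := hp.odd_of_ne_two (by omega)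
  have hκ₂0 : κ₂ ≠ 0 := by rcases hP2 with h|h; exacts [by simp [h], h.ne_zero]
  have hκ₅0 : κ₅ ≠ 0 := by rcases hP5 with h|h; exacts [by simp [h], h.ne_zero]
  have hκ₇0 : κ₇ ≠ 0 := by rcases hP7 with h|h; exacts [by simp [h], h.ne_zero]
  have hk0 : κ₂^2*κ₅*κ₇^2 ≠ 0 :=
    mul_ne_zero (mul_ne_zero (pow_ne_zero _ hκ₂0) hκ₅0) (pow_ne_zero _ hκ₇0)
  have hr1 : 1 ≤ r^2 := by rcases hr.lt_or_gt with h|h <;> nlinarith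
  have hQpos : 0 < x^4+40*x^2*r^2+140*r^4 := by
    nlinarith [sq_nonneg (x^2), sq_nonneg (x*r), sq_nonneg (r^2)]
  have hV0 : V ≠ 0 := by intro h; rw [h, mul_zero] at hkV; nlinarith
  have hkx : ∀ q : ℤ, Prime q → q ∣ κ₂^2*κ₅*κ₇^2 → q ∣ x := by
    intro q hq hd
    rcases hq.dvd_mul.mp hd with h | h
    · rcases hq.dvd_mul.mp h with h' | h'
      · exact (hq.dvd_of_dvd_pow h').trans h2x
      · exact h'.trans h5x
    · exact (hq.dvd_of_dvd_pow h).trans h7x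
  have hcop : IsCoprime (x*(κ₂^2*κ₅*κ₇^2)) V := coprime_key x r _ V hxr hkV hkx h2V h5V h7V
  have hUV : (x*(κ₂^2*κ₅*κ₇^2)) * V = y^p := by linear_combination x * hkV + hy7
  obtain ⟨u, hu⟩ := Int.eq_pow_of_mul_eq_pow_odd_left hcop hpodd hUV
  obtain ⟨v, hv⟩ := Int.eq_pow_of_mul_eq_pow_odd_right hcop hpodd hUV
  have hdu : ∀ κ : ℤ, (κ = 1 ∨ Prime κ) → κ ∣ x → κ ∣ u := by
    intro κ hPκ hκx
    rcases hPκ with h|h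
    · rw [h]; exact one_dvd _
    · refine h.dvd_of_dvd_pow (n := p) ?_
      rw [← hu]
      exact Dvd.dvd.mul_right hκx _
  have hcomb : κ₂*κ₅*κ₇ ∣ u :=
    (hc27.mul_left hc57).mul_dvd (hc25.mul_dvd (hdu κ₂ hP2 h2x) (hdu κ₅ hP5 h5x))
      (hdu κ₇ hP7 h7x)
  obtain ⟨a, ha⟩ := hcomb
  have hxf : x = κ₂^(p-2)*κ₅^(p-1)*κ₇^(p-2)*a^p := by
    apply mul_right_cancel₀ hk0
    rw [hu, ha, mul_pow, mul_pow, mul_pow]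
    rw [show κ₂^p = κ₂^(p-2)*κ₂^2 by rw [← pow_add]; congr 1; omega,
        show κ₅^p = κ₅^(p-1)*κ₅ by rw [← pow_succ]; congr 1; omega,
        show κ₇^p = κ₇^(p-2)*κ₇^2 by rw [← pow_add]; congr 1; omega]
    ring
  have hv0 : v ≠ 0 := by
    intro h
    rw [h, zero_pow hp0.ne'] at hv
    exact hV0 hv
  have hbex : ∃ b : ℤ, κ₇ * v = 7 * b := by
    rcases h7or with h|⟨h,hnd⟩
    · exact ⟨v, by rw [h]⟩
    · have h7p : Prime (7:ℤ) := by norm_num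
      have h7V : (7:ℤ) ∣ V := by
        have : (7:ℤ) ∣ (κ₂^2*κ₅*κ₇^2)*V := by rw [hkV]; exact ⟨_, rfl⟩
        rcases h7p.dvd_mul.mp this with hh | hh
        · rcases h7p.dvd_mul.mp hh with hh' | hh'
          · exact absurd hh' hnd
          · rw [h] at hh'; norm_num at hh'
        · exact hh
      have h7v : (7:ℤ) ∣ v := h7p.dvd_of_dvd_pow (n := p) (by rw [← hv]; exact h7V)
      obtain ⟨b, hb⟩ := h7v
      exact ⟨b, by rw [h, one_mul, hb]⟩
  obtain ⟨b, hbv⟩ := hbex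
  have hbdvdv : b ∣ v := by
    rcases h7or with h|⟨h,_⟩
    · have : v = b := by
        apply mul_left_cancel₀ (show (7:ℤ) ≠ 0 by norm_num)
        rw [h] at hbv
        linarith
      exact this ▸ dvd_rfl
    · exact ⟨7, by rw [h, one_mul] at hbv; linarith⟩
  refine ⟨a, b, ?_, ?_, ?_, ?_⟩
  · intro h
    rw [h, mul_zero] at ha
    have : x * (κ₂^2*κ₅*κ₇^2) = 0 := by rw [hu, ha, zero_pow hp0.ne']
    exact (mul_ne_zero hx0 hk0) this
  · intro h
    rw [h, mul_zero] at hbv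
    exact (mul_ne_zero hκ₇0 hv0) hbv
  · have h1 : IsCoprime (u^p) (v^p) := by rw [← hu, ← hv]; exact hcop
    have h2 : IsCoprime u v := (IsCoprime.pow_left_iff hp0).mp ((IsCoprime.pow_right_iff hp0).mp h1)
    exact (h2.of_isCoprime_of_dvd_left ⟨κ₂*κ₅*κ₇, by rw [ha]; ring⟩).of_isCoprime_of_dvd_right hbdvdv
  · have hdiv1 : 7*b/κ₇ = v := by rw [← hbv, Int.mul_ediv_cancel_left _ hκ₇0]
    have hdiv2 : (2*x^2+14*r^2)/(κ₂*κ₇) = W := by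
      rw [← hW, Int.mul_ediv_cancel_left _ (mul_ne_zero hκ₂0 hκ₇0)]
    rw [hdiv1, hdiv2]
    apply mul_right_cancel₀ hk0
    have E2 : κ₂^(4*p-10)*κ₂^2 = (κ₂^(p-2))^4 := by rw [← pow_add, ← pow_mul]; congr 1; omega
    have E5 : κ₅^(4*p-5)*κ₅^1 = (κ₅^(p-1))^4 := by rw [← pow_add, ← pow_mul]; congr 1; omega
    have E7 : κ₇^(4*p-10)*κ₇^2 = (κ₇^(p-2))^4 := by rw [← pow_add, ← pow_mul]; congr 1; omega
    have Ea : a^(4*p) = (a^p)^4 := by rw [← pow_mul]; congr 1; omega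
    have hx4 : x^4 = (κ₂^(p-2))^4*(κ₅^(p-1))^4*(κ₇^(p-2))^4*a^(4*p) := by
      rw [hxf, Ea]; ring
    calc (κ₂^(4*p-10) * κ₅^(4*p-5) * κ₇^(4*p-10) * 13 * a^(4*p) + v^p) * (κ₂^2*κ₅*κ₇^2)
        = 13*a^(4*p)*((κ₂^(4*p-10)*κ₂^2)*(κ₅^(4*p-5)*κ₅^1)*(κ₇^(4*p-10)*κ₇^2))
            + (κ₂^2*κ₅*κ₇^2)*v^p := by ring
      _ = 13*a^(4*p)*((κ₂^(p-2))^4*(κ₅^(p-1))^4*(κ₇^(p-2))^4)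
            + 7*(x^4+40*x^2*r^2+140*r^4) := by rw [E2, E5, E7, ← hv, hkV]
      _ = 13*x^4 + 7*(x^4+40*x^2*r^2+140*r^4) := by linear_combination -13*hx4
      _ = 5*(2*x^2+14*r^2)^2 := by ring
      _ = (κ₅*(5/κ₅))*((κ₂*κ₇)*W)^2 := by rw [h5div, hW]
      _ = (5/κ₅)*W^2*(κ₂^2*κ₅*κ₇^2) := by ring

theorem ternary_equation_d_eq_three (r : ℤ) (hr : r ≠ 0) (p : ℕ) (hp : p.Prime)
    (hp19 : 19 < p) (x y : ℤ) (hxr : Int.gcd x r = 1) (hnt : (x, y) ≠ (0, 0))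
    (heq : (x - 3*r)^5 + (x - 2*r)^5 + (x - r)^5 + x^5 + (x + r)^5 + (x + 2*r)^5 +
      (x + 3*r)^5 = y^p)
    (κ₂ κ₅ κ₇ : ℤ) (hκ₂ : κ₂ = Int.gcd x 2) (hκ₅ : κ₅ = Int.gcd x 5)
    (hκ₇ : κ₇ = Int.gcd x 7) :
    ∃ a b : ℤ, a ≠ 0 ∧ b ≠ 0 ∧ IsCoprime a b ∧
      κ₂^(4*p-10) * κ₅^(4*p-5) * κ₇^(4*p-10) * 13 * a^(4*p) + (7*b/κ₇)^p =
        (5/κ₅) * ((2*x^2 + 14*r^2)/(κ₂*κ₇))^2 := by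
  have hx0 : x ≠ 0 := by
    rintro rfl
    have h0 : (0:ℤ) = y^p := by linear_combination heq
    have hy0 : y = 0 := by
      have := (pow_eq_zero_iff hp.pos.ne').mp h0.symm
      exact this
    exact hnt (by simp [hy0])
  have hy7 : 7*x*(x^4+40*x^2*r^2+140*r^4) = y^p := by linear_combination heq
  have A2 : ((2:ℤ) ∣ x ∧ κ₂ = 2) ∨ (¬(2:ℤ) ∣ x ∧ κ₂ = 1) := by
    rw [hκ₂]; exact_mod_cast gcd_prime_cases Nat.prime_two x
  have A5 : ((5:ℤ) ∣ x ∧ κ₅ = 5) ∨ (¬(5:ℤ) ∣ x ∧ κ₅ = 1) := by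
    rw [hκ₅]; exact_mod_cast gcd_prime_cases (by norm_num : Nat.Prime 5) x
  have A7 : ((7:ℤ) ∣ x ∧ κ₇ = 7) ∨ (¬(7:ℤ) ∣ x ∧ κ₇ = 1) := by
    rw [hκ₇]; exact_mod_cast gcd_prime_cases (by norm_num : Nat.Prime 7) x
  have h2x : κ₂ ∣ x := by rw [hκ₂]; exact Int.gcd_dvd_left _ _
  have h5x : κ₅ ∣ x := by rw [hκ₅]; exact Int.gcd_dvd_left _ _
  have h7x : κ₇ ∣ x := by rw [hκ₇]; exact Int.gcd_dvd_left _ _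
  have cop : ∀ m n : ℤ, Int.gcd m n = 1 → IsCoprime m n := fun _ _ h =>
    Int.isCoprime_iff_gcd_eq_one.mpr h
  -- coprimality of the kappas
  have hc25 : IsCoprime κ₂ κ₅ := by
    rcases A2 with ⟨_,e2⟩|⟨_,e2⟩ <;> rcases A5 with ⟨_,e5⟩|⟨_,e5⟩ <;> rw [e2, e5] <;>
      first
        | exact isCoprime_one_left
        | exact isCoprime_one_right
        | exact cop 2 5 (by decide)
  have hc27 : IsCoprime κ₂ κ₇ := by
    rcases A2 with ⟨_,e2⟩|⟨_,e2⟩ <;> rcases A7 with ⟨_,e7⟩|⟨_,e7⟩ <;> rw [e2, e7] <;>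
      first
        | exact isCoprime_one_left
        | exact isCoprime_one_right
        | exact cop 2 7 (by decide)
  have hc57 : IsCoprime κ₅ κ₇ := by
    rcases A5 with ⟨_,e5⟩|⟨_,e5⟩ <;> rcases A7 with ⟨_,e7⟩|⟨_,e7⟩ <;> rw [e5, e7] <;>
      first
        | exact isCoprime_one_left
        | exact isCoprime_one_right
        | exact cop 5 7 (by decide)
  have hP2 : κ₂ = 1 ∨ Prime κ₂ := by
    rcases A2 with ⟨_,e⟩|⟨_,e⟩
    · right; rw [e]; exact Int.prime_two
    · left; exact e
  have hP5 : κ₅ = 1 ∨ Prime κ₅ := by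
    rcases A5 with ⟨_,e⟩|⟨_,e⟩
    · right; rw [e]; norm_num
    · left; exact e
  have hP7 : κ₇ = 1 ∨ Prime κ₇ := by
    rcases A7 with ⟨_,e⟩|⟨_,e⟩
    · right; rw [e]; norm_num
    · left; exact e
  have h5div : κ₅ * (5/κ₅) = 5 := by
    rcases A5 with ⟨_,e⟩|⟨_,e⟩ <;> rw [e] <;> norm_num
  have h7or : κ₇ = 7 ∨ (κ₇ = 1 ∧ ¬ (7:ℤ) ∣ κ₂^2*κ₅) := by
    rcases A7 with ⟨_,e⟩|⟨_,e⟩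
    · left; exact e
    · right
      refine ⟨e, ?_⟩
      rcases A2 with ⟨_,e2⟩|⟨_,e2⟩ <;> rcases A5 with ⟨_,e5⟩|⟨_,e5⟩ <;> rw [e2, e5] <;> decide
  -- divisibility facts for Q
  have hd2 : (2:ℤ) ∣ x → κ₂^2 ∣ (x^4+40*x^2*r^2+140*r^4) := by
    intro h
    rcases A2 with ⟨_,e⟩|⟨hn,_⟩
    · obtain ⟨t, rfl⟩ := h
      rw [e]
      exact ⟨4*t^4+40*t^2*r^2+35*r^4, by ring⟩
    · exact absurd h hn
  have hd5 : (5:ℤ) ∣ x → κ₅ ∣ (x^4+40*x^2*r^2+140*r^4) := by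
    intro h
    rcases A5 with ⟨_,e⟩|⟨hn,_⟩
    · obtain ⟨t, rfl⟩ := h
      rw [e]
      exact ⟨125*t^4+200*t^2*r^2+28*r^4, by ring⟩
    · exact absurd h hn
  have hd7 : (7:ℤ) ∣ x → κ₇^2 ∣ 7*(x^4+40*x^2*r^2+140*r^4) := by
    intro h
    rcases A7 with ⟨_,e⟩|⟨hn,_⟩
    · obtain ⟨t, rfl⟩ := h
      rw [e]
      exact ⟨343*t^4+280*t^2*r^2+20*r^4, by ring⟩
    · exact absurd h hn
  have E2 : κ₂^2 ∣ (x^4+40*x^2*r^2+140*r^4) := by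
    rcases A2 with ⟨h,_⟩|⟨_,e⟩
    · exact hd2 h
    · rw [e]; norm_num
  have E5 : κ₅ ∣ (x^4+40*x^2*r^2+140*r^4) := by
    rcases A5 with ⟨h,_⟩|⟨_,e⟩
    · exact hd5 h
    · rw [e]; exact one_dvd _
  have E7 : κ₇^2 ∣ 7*(x^4+40*x^2*r^2+140*r^4) := by
    rcases A7 with ⟨h,_⟩|⟨_,e⟩
    · exact hd7 h
    · rw [e]; norm_num
  have hkdvd : (κ₂^2*κ₅*κ₇^2) ∣ 7*(x^4+40*x^2*r^2+140*r^4) := by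
    have d1 : κ₂^2*κ₅ ∣ (x^4+40*x^2*r^2+140*r^4) := (hc25.pow_left).mul_dvd E2 E5
    have d1' : κ₂^2*κ₅ ∣ 7*(x^4+40*x^2*r^2+140*r^4) := d1.mul_left 7
    exact (((hc27.pow_left).mul_left hc57).pow_right).mul_dvd d1' E7
  obtain ⟨V, hV⟩ := hkdvd
  have hkV : (κ₂^2*κ₅*κ₇^2) * V = 7*(x^4+40*x^2*r^2+140*r^4) := hV.symm
  -- W
  have hWdvd : (κ₂*κ₇) ∣ 2*x^2+14*r^2 := by
    have w2 : κ₂ ∣ 2*x^2+14*r^2 := by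
      rcases A2 with ⟨_,e⟩|⟨_,e⟩ <;> rw [e]
      · exact ⟨x^2+7*r^2, by ring⟩
      · exact one_dvd _
    have w7 : κ₇ ∣ 2*x^2+14*r^2 := by
      rcases A7 with ⟨h,e⟩|⟨_,e⟩ <;> rw [e]
      · obtain ⟨t, rfl⟩ := h
        exact ⟨14*t^2+2*r^2, by ring⟩
      · exact one_dvd _
    exact hc27.mul_dvd w2 w7
  obtain ⟨W, hW⟩ := hWdvd
  -- the nondivisibility conditions
  have h2V : (2:ℤ) ∣ x → ¬ (2:ℤ) ∣ V := by
    intro h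
    rcases A2 with ⟨_,e⟩|⟨hn,_⟩
    · obtain ⟨t, ht⟩ := h
      refine notdvd2 r V (κ₅*κ₇^2) t (ht ▸ hxr) ?_
      rw [e, ht] at hkV
      linear_combination hkV
    · exact absurd h hn
  have h5V : (5:ℤ) ∣ x → ¬ (5:ℤ) ∣ V := by
    intro h
    rcases A5 with ⟨_,e⟩|⟨hn,_⟩
    · obtain ⟨t, ht⟩ := h
      refine notdvd5 r V (κ₂^2*κ₇^2) t (ht ▸ hxr) ?_
      rw [e, ht] at hkV
      linear_combination hkV
    · exact absurd h hn
  have h7V : (7:ℤ) ∣ x → ¬ (7:ℤ) ∣ V := by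
    intro h
    rcases A7 with ⟨_,e⟩|⟨hn,_⟩
    · obtain ⟨t, ht⟩ := h
      refine notdvd7 r V (κ₂^2*κ₅) t (ht ▸ hxr) ?_
      rw [e, ht] at hkV
      linear_combination hkV
    · exact absurd h hn
  exact main_aux x r y V W κ₂ κ₅ κ₇ p hp hp19 hxr hr hx0 hy7 hkV hW.symm h2x h5x h7x
    hP2 hP5 hP7 hc25 hc27 hc57 h5div h7or h2V h5V h7V
end
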